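/- Let A be a Codazzi tensor on M^n, n ≥ 3, with exactly two distinct eigenvalue functions μ and λ, dim V_μ = 1, and let X ∈ V_μ be a unit vector field. Then for all Y, Z ∈ V_λ one has g(∇_Z X, Y) = g(∇_Y X, Z); i.e., the (0,2)-tensor ∇X is symmetric when restricted to V_λ × V_λ, regardless of any trace condition on A. -/

import Mathlib

/-- Abstract axiomatization of the space of smooth vector fields `VF` on a
Riemannian manifold with point set `M`: a module over the ring of functions
`M → ℝ`, together with the metric `g`, the Levi-Civita connection `nabla`,
the directional derivative `D`, the gradient `grad` and the Lie bracket,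
satisfying the usual laws. -/
structure RiemannianSetup (M : Type*) (VF : Type*) [AddCommGroup VF]
    [Module (M → ℝ) VF] where
  g : VF → VF → M → ℝ
  nabla : VF → VF → VF
  D : VF → (M → ℝ) → M → ℝ
  grad : (M → ℝ) → VF
  bracket : VF → VF → VF
  g_symm : ∀ X Y, g X Y = g Y X
  g_addLeft : ∀ X Y Z, g (X + Y) Z = g X Z + g Y Z
  g_smulLeft : ∀ (f : M → ℝ) (X Y : VF), g (f • X) Y = f * g X Y
  g_nondeg : ∀ X Y : VF, (∀ Z, g X Z = g Y Z) → X = Y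
  nabla_addRight : ∀ X Y Z, nabla X (Y + Z) = nabla X Y + nabla X Z
  nabla_addLeft : ∀ X Y Z, nabla (X + Y) Z = nabla X Z + nabla Y Z
  nabla_smulLeft : ∀ (f : M → ℝ) (X Y : VF), nabla (f • X) Y = f • nabla X Y
  nabla_leibniz : ∀ (X : VF) (f : M → ℝ) (Y : VF),
    nabla X (f • Y) = D X f • Y + f • nabla X Y
  D_add : ∀ X (f₁ f₂ : M → ℝ), D X (f₁ + f₂) = D X f₁ + D X f₂
  D_mul : ∀ X (f₁ f₂ : M → ℝ), D X (f₁ * f₂) = D X f₁ * f₂ + f₁ * D X f₂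
  D_const : ∀ X (r : ℝ), D X (fun _ => r) = 0
  D_addLeft : ∀ X Y (f : M → ℝ), D (X + Y) f = D X f + D Y f
  D_smulLeft : ∀ (h : M → ℝ) X (f : M → ℝ), D (h • X) f = h * D X f
  compat : ∀ X Y Z, D X (g Y Z) = g (nabla X Y) Z + g Y (nabla X Z)
  torsion_free : ∀ X Y, bracket X Y = nabla X Y - nabla Y X
  grad_spec : ∀ (f : M → ℝ) (Z : VF), g (grad f) Z = D Z f

namespace RiemannianSetup

variable {M VF : Type*} [AddCommGroup VF] [Module (M → ℝ) VF]

/-- Covariant derivative `(∇_X A) Y` of a `(1,1)`-tensor `A`. -/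
def covDeriv (S : RiemannianSetup M VF) (A : VF → VF) (X Y : VF) : VF :=
  S.nabla X (A Y) - A (S.nabla X Y)

/-- A Codazzi tensor: a self-adjoint `(1,1)`-tensor with
`(∇_X A) Y = (∇_Y A) X` for all vector fields `X`, `Y`. -/
def IsCodazzi (S : RiemannianSetup M VF) (A : VF → VF) : Prop :=
  (∀ X Y, S.g (A X) Y = S.g X (A Y)) ∧
  (∀ X Y, S.covDeriv A X Y = S.covDeriv A Y X)

end RiemannianSetup

/-- For a Codazzi tensor with exactly two distinct eigenfunctions `μ`, `λ`,
`dim V_μ = 1` with unit section `X`: the tensor `(Y,Z) ↦ g(∇_Y X, Z)` is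
symmetric on `V_λ × V_λ`, regardless of any trace condition. -/
theorem codazzi_nablaX_symm_on_Vlam
    {M VF : Type*} [AddCommGroup VF] [Module (M → ℝ) VF]
    (n : ℕ) (hn : 3 ≤ n)
    (S : RiemannianSetup M VF) (A : VF → VF) (hA : S.IsCodazzi A)
    (mu lam : M → ℝ) (hdist : ∀ p, mu p ≠ lam p)
    (X : VF) (hX : A X = mu • X) (hXunit : S.g X X = 1)
    (hdecomp : ∀ Z : VF, ∃ (c : M → ℝ) (Y : VF),
      A Y = lam • Y ∧ Z = c • X + Y) :
    ∀ Y Z : VF, A Y = lam • Y → A Z = lam • Z →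
      S.g (S.nabla Z X) Y = S.g (S.nabla Y X) Z := by
  obtain ⟨hsa, hcod⟩ := hA
  intro Y Z hY hZ
  -- additivity helpers for g in the left slot
  have gzero : ∀ Z' : VF, S.g 0 Z' = 0 := by
    intro Z'
    have h := S.g_addLeft 0 0 Z'
    rw [add_zero] at h
    exact add_eq_left.mp h.symm
  have gsub : ∀ X' Y' Z' : VF, S.g (X' - Y') Z' = S.g X' Z' - S.g Y' Z' := by
    intro X' Y' Z'
    have h := S.g_addLeft (X' - Y') Y' Z'
    rw [sub_add_cancel] at h
    rw [h]; ring
  -- eigenvectors for distinct eigenvalues are orthogonal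
  have horth : ∀ W : VF, A W = lam • W → S.g W X = 0 := by
    intro W hW
    have h1 : S.g (A X) W = S.g X (A W) := hsa X W
    rw [hX, hW, S.g_smulLeft, S.g_symm X (lam • W), S.g_smulLeft,
      S.g_symm W X] at h1
    funext p
    have hp := congrFun h1 p
    simp only [Pi.mul_apply] at hp
    have hne : mu p - lam p ≠ 0 := sub_ne_zero.mpr (hdist p)
    have : (mu p - lam p) * S.g X W p = 0 := by ring_nf; linarith
    have hx : S.g X W p = 0 := by
      rcases mul_eq_zero.mp this with h | h
      · exact absurd h hne
      · exact h
    have := congrFun (S.g_symm W X) p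
    simp only [Pi.zero_apply]
    rw [this, hx]
  have hgYX : S.g Y X = 0 := horth Y hY
  have hgZX : S.g Z X = 0 := horth Z hZ
  -- D of the zero function vanishes
  have hD0 : ∀ W : VF, S.D W (0 : M → ℝ) = 0 := by
    intro W
    have := S.D_const W 0
    convert this using 2
    rfl
  -- metric compatibility with the vanishing products
  have hc1 : S.g (S.nabla Y Z) X + S.g Z (S.nabla Y X) = 0 := by
    have h := S.compat Y Z X
    rw [hgZX, hD0] at h
    exact h.symm
  have hc2 : S.g (S.nabla Z Y) X + S.g Y (S.nabla Z X) = 0 := by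
    have h := S.compat Z Y X
    rw [hgYX, hD0] at h
    exact h.symm
  -- g(A W, X) = mu * g(W, X)
  have gAX : ∀ W : VF, S.g (A W) X = mu * S.g W X := by
    intro W
    rw [hsa W X, hX, S.g_symm W (mu • X), S.g_smulLeft, S.g_symm X W]
  -- the Codazzi identity paired with X
  have hcodYZ := hcod Y Z
  unfold RiemannianSetup.covDeriv at hcodYZ
  rw [hY, hZ, S.nabla_leibniz, S.nabla_leibniz] at hcodYZ
  have hpair := congrArg (fun W => S.g W X) hcodYZ
  simp only [gsub, S.g_addLeft, S.g_smulLeft, gAX, hgYX, hgZX, mul_zero] at hpair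
  -- hpair : lam * g(∇_Y Z, X) - mu * g(∇_Y Z, X) = lam * g(∇_Z Y, X) - mu * ...
  have hkey : S.g (S.nabla Y Z) X = S.g (S.nabla Z Y) X := by
    funext p
    have hp := congrFun hpair p
    simp only [Pi.add_apply, Pi.sub_apply, Pi.mul_apply, Pi.zero_apply,
      zero_add, add_zero] at hp
    have hne : lam p - mu p ≠ 0 := sub_ne_zero.mpr (Ne.symm (hdist p))
    have h2 : (lam p - mu p) * S.g (S.nabla Y Z) X p
        = (lam p - mu p) * S.g (S.nabla Z Y) X p := by ring_nf; ring_nf at hp; linarith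
    exact mul_left_cancel₀ hne h2
  rw [S.g_symm (S.nabla Z X) Y, S.g_symm (S.nabla Y X) Z]
  have e1 : S.g Y (S.nabla Z X) = - S.g (S.nabla Z Y) X :=
    eq_neg_of_add_eq_zero_left ((add_comm _ _).trans hc2)
  have e2 : S.g Z (S.nabla Y X) = - S.g (S.nabla Y Z) X :=
    eq_neg_of_add_eq_zero_left ((add_comm _ _).trans hc1)
  rw [e1, e2, hkey]
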